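/- Let ω ∈ ℝ, μ > 0, β > 0, α > γ > 0. Suppose u₁, u₂, u₃ are continuous on the closed unit ball, twice continuously differentiable in B₁, positive in B₁, satisfy in B₁ the system L_ω u₁ = μu₁(1−u₁) − βαu₁u₂ − βγu₁u₃, L_ω u₂ = μu₂(1−u₂) − βγu₁u₂ − βαu₂u₃, L_ω u₃ = μu₃(1−u₃) − βαu₁u₃ − βγu₂u₃, and satisfy 0 ≤ uᵢ < 1 on ∂B₁. Then 0 < uᵢ(x) < 1 for every x ∈ B₁ and every i = 1, 2, 3. -/

import Mathlib

noncomputable section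

/-- First partial derivative `∂₁u`. -/
def pd1 (u : ℝ × ℝ → ℝ) (x : ℝ × ℝ) : ℝ := fderiv ℝ u x (1, 0)

/-- Second partial derivative `∂₂u`. -/
def pd2 (u : ℝ × ℝ → ℝ) (x : ℝ × ℝ) : ℝ := fderiv ℝ u x (0, 1)

/-- The Laplacian `Δu = ∂₁₁u + ∂₂₂u`. -/
def lap (u : ℝ × ℝ → ℝ) (x : ℝ × ℝ) : ℝ := pd1 (pd1 u) x + pd2 (pd2 u) x

/-- The rotating-frame operator `L_ω u = −Δu + ω x⊥·∇u`. -/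
def Lop (ω : ℝ) (u : ℝ × ℝ → ℝ) (x : ℝ × ℝ) : ℝ :=
  -lap u x + ω * (-x.2 * pd1 u x + x.1 * pd2 u x)

/-- The open unit disk `B₁ ⊂ ℝ²`. -/
def unitBall : Set (ℝ × ℝ) := {x | x.1 ^ 2 + x.2 ^ 2 < 1}

/-- The closed unit disk in `ℝ²`. -/
def unitClosedBall : Set (ℝ × ℝ) := {x | x.1 ^ 2 + x.2 ^ 2 ≤ 1}

/-- The unit circle `∂B₁ ⊂ ℝ²`. -/
def unitSphere : Set (ℝ × ℝ) := {x | x.1 ^ 2 + x.2 ^ 2 = 1}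

lemma ball_subset_closed : unitBall ⊆ unitClosedBall := by
  intro x hx
  simp only [unitClosedBall, Set.mem_setOf_eq]
  exact le_of_lt hx

lemma isOpen_unitBall : IsOpen unitBall := by
  have : Continuous fun x : ℝ × ℝ => x.1 ^ 2 + x.2 ^ 2 := by continuity
  exact isOpen_lt this continuous_const

/-- one-dimensional second derivative test at a local max -/
lemma second_test (f φ : ℝ → ℝ) (T : Set ℝ) (hT : IsOpen T) (h0 : (0:ℝ) ∈ T)
    (hf : ∀ t ∈ T, HasDerivAt f (φ t) t) (c : ℝ) (hφ : HasDerivAt φ c 0)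
    (hmax : IsLocalMax f 0) : c ≤ 0 := by
  by_contra hc
  push_neg at hc
  have hd0 : deriv f 0 = 0 := hmax.deriv_eq_zero
  have hφ0 : φ 0 = 0 := by rw [← (hf 0 h0).deriv, hd0]
  -- slope tendsto c
  have hslope : Filter.Tendsto (slope φ 0) (nhdsWithin 0 {0}ᶜ) (nhds c) :=
    hasDerivAt_iff_tendsto_slope.mp hφ
  have E1 : ∀ᶠ t in nhdsWithin 0 {0}ᶜ, 0 < slope φ 0 t :=
    hslope.eventually (eventually_gt_nhds hc)
  have E2 : ∀ᶠ t in nhds (0:ℝ), t ∈ T := hT.mem_nhds h0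
  have E3 : ∀ᶠ t in nhds (0:ℝ), f t ≤ f 0 := hmax
  have E1' : ∀ᶠ t in nhds (0:ℝ), t ∈ ({0}ᶜ : Set ℝ) → 0 < slope φ 0 t :=
    eventually_nhdsWithin_iff.mp E1
  obtain ⟨δ, hδ, hAll⟩ := Metric.eventually_nhds_iff.mp ((E1'.and E2).and E3)
  set ρ := δ / 2 with hρdef
  have hρ : 0 < ρ := by positivity
  have hρδ : ρ < δ := by rw [hρdef]; linarith
  have hmem : ∀ t ∈ Set.Icc (0:ℝ) ρ, t ∈ T ∧ f t ≤ f 0 := by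
    intro t ht
    have := hAll (y := t) (by rw [Real.dist_eq, sub_zero, abs_of_nonneg ht.1]; linarith [ht.2])
    exact ⟨this.1.2, this.2⟩
  have hcont : ContinuousOn f (Set.Icc 0 ρ) := fun t ht =>
    ((hf t (hmem t ht).1).continuousAt).continuousWithinAt
  have hderiv : ∀ t ∈ Set.Ioo (0:ℝ) ρ, 0 < deriv f t := by
    intro t ht
    have htT : t ∈ T := (hmem t ⟨le_of_lt ht.1, le_of_lt ht.2⟩).1
    rw [(hf t htT).deriv]
    have hs : 0 < slope φ 0 t := by
      have := hAll (y := t) (by rw [Real.dist_eq, sub_zero, abs_of_nonneg (le_of_lt ht.1)]; linarith [ht.2])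
      exact this.1.1 (by simp [ne_of_gt ht.1])
    rw [slope_def_field, hφ0] at hs
    have : 0 < φ t / t := by simpa using hs
    have := mul_pos this ht.1
    rwa [div_mul_cancel₀ _ (ne_of_gt ht.1)] at this
  have hmono : StrictMonoOn f (Set.Icc 0 ρ) := by
    apply strictMonoOn_of_deriv_pos (convex_Icc 0 ρ) hcont
    intro t ht
    rw [interior_Icc] at ht
    exact hderiv t ht
  have h1 : f 0 < f ρ := hmono (Set.left_mem_Icc.mpr (le_of_lt hρ))
    (Set.right_mem_Icc.mpr (le_of_lt hρ)) hρ
  linarith [(hmem ρ (Set.right_mem_Icc.mpr (le_of_lt hρ))).2]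

/-- directional second derivative nonpositive at interior local max -/
lemma dir2_nonpos (u : ℝ × ℝ → ℝ) (hreg : ContDiffOn ℝ 2 u unitBall)
    (z : ℝ × ℝ) (hz : z ∈ unitBall) (hmax : IsLocalMax u z) (v : ℝ × ℝ) :
    fderiv ℝ (fun x => fderiv ℝ u x v) z v ≤ 0 := by
  set g : ℝ → ℝ × ℝ := fun t => z + t • v with hg
  have hgc : Continuous g := by continuity
  have hg0 : g 0 = z := by simp [hg]
  have hgd : ∀ t : ℝ, HasDerivAt g v t := by
    intro t
    have : HasDerivAt (fun s : ℝ => s • v) ((1:ℝ) • v) t := (hasDerivAt_id t).smul_const v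
    simpa only [one_smul] using this.const_add z
  set T : Set ℝ := g ⁻¹' unitBall with hT
  have hTopen : IsOpen T := isOpen_unitBall.preimage hgc
  have h0T : (0:ℝ) ∈ T := by simp [hT, hg0]; exact hz
  have hud : ∀ x ∈ unitBall, DifferentiableAt ℝ u x := fun x hx =>
    (hreg.differentiableOn (by norm_num)).differentiableAt (isOpen_unitBall.mem_nhds hx)
  have hFd : DifferentiableAt ℝ (fderiv ℝ u) z := by
    have h1 : ContDiffOn ℝ 1 (fderiv ℝ u) unitBall :=
      hreg.fderiv_of_isOpen isOpen_unitBall (by norm_num)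
    exact (h1.differentiableOn (by norm_num)).differentiableAt (isOpen_unitBall.mem_nhds hz)
  have hψd : DifferentiableAt ℝ (fun x => fderiv ℝ u x v) z :=
    hFd.clm_apply (differentiableAt_const v)
  have hφ : HasDerivAt (fun t => fderiv ℝ u (g t) v)
      (fderiv ℝ (fun x => fderiv ℝ u x v) z v) 0 := by
    have h1 : HasFDerivAt (fun x => fderiv ℝ u x v)
        (fderiv ℝ (fun x => fderiv ℝ u x v) z) (g 0) := by
      rw [hg0]; exact hψd.hasFDerivAt
    exact h1.comp_hasDerivAt 0 (hgd 0)
  have hf : ∀ t ∈ T, HasDerivAt (fun t => u (g t)) (fderiv ℝ u (g t) v) t := by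
    intro t ht
    exact (hud (g t) ht).hasFDerivAt.comp_hasDerivAt t (hgd t)
  have hmax' : IsLocalMax (fun t => u (g t)) 0 := by
    have : Filter.Tendsto g (nhds 0) (nhds z) := by rw [← hg0]; exact hgc.continuousAt
    have h2 := this.eventually hmax
    simp only [IsLocalMax, IsMaxFilter]
    simpa [hg0] using h2
  exact second_test _ _ T hTopen h0T hf _ hφ hmax'

/-- max principle core lemma -/
lemma key (ω : ℝ) (u : ℝ × ℝ → ℝ) (hcont : ContinuousOn u unitClosedBall)
    (hreg : ContDiffOn ℝ 2 u unitBall)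
    (hneg : ∀ x ∈ unitBall, 1 ≤ u x → Lop ω u x < 0)
    (hbc : ∀ x ∈ unitSphere, u x < 1) :
    ∀ x ∈ unitBall, u x < 1 := by
  by_contra h
  push_neg at h
  obtain ⟨x₀, hx₀, hux₀⟩ := h
  have hcomp : IsCompact unitClosedBall := by
    have hcl : IsClosed unitClosedBall := by
      have : Continuous fun x : ℝ × ℝ => x.1 ^ 2 + x.2 ^ 2 := by continuity
      exact isClosed_le this continuous_const
    apply Metric.isCompact_of_isClosed_isBounded hcl
    apply Bornology.IsBounded.subset (Metric.isBounded_closedBall (x := ((0:ℝ),(0:ℝ))) (r := 1))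
    intro x hx
    simp only [unitClosedBall, Set.mem_setOf_eq] at hx
    simp only [Metric.mem_closedBall, Prod.dist_eq, Real.dist_eq, sub_zero]
    have h1 : |x.1| ≤ 1 := by nlinarith [sq_abs x.1, abs_nonneg x.1, sq_nonneg x.2]
    have h2 : |x.2| ≤ 1 := by nlinarith [sq_abs x.2, abs_nonneg x.2, sq_nonneg x.1]
    exact max_le h1 h2
  have hne : unitClosedBall.Nonempty := ⟨(0,0), by simp [unitClosedBall]⟩
  obtain ⟨z, hzK, hzmax⟩ := hcomp.exists_isMaxOn hne hcont
  have hx₀' : x₀ ∈ unitClosedBall := by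
    simp only [unitClosedBall, Set.mem_setOf_eq]
    exact le_of_lt hx₀
  have huz : 1 ≤ u z := le_trans hux₀ (hzmax hx₀')
  have hzK' : z.1 ^ 2 + z.2 ^ 2 ≤ 1 := hzK
  have hzball : z ∈ unitBall := by
    rcases lt_or_eq_of_le hzK' with h | h
    · exact h
    · exact absurd (hbc z h) (not_lt.mpr huz)
  have hlocmax : IsLocalMax u z :=
    hzmax.isLocalMax (Filter.mem_of_superset (isOpen_unitBall.mem_nhds hzball)
      ball_subset_closed)
  have hgrad : fderiv ℝ u z = 0 := hlocmax.fderiv_eq_zero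
  have h11 : pd1 (pd1 u) z ≤ 0 := dir2_nonpos u hreg z hzball hlocmax (1, 0)
  have h22 : pd2 (pd2 u) z ≤ 0 := dir2_nonpos u hreg z hzball hlocmax (0, 1)
  have hL : 0 ≤ Lop ω u z := by
    simp only [Lop, lap, pd1, pd2, hgrad]
    simp only [pd1, pd2] at h11 h22
    simp only [ContinuousLinearMap.zero_apply]
    ring_nf
    nlinarith
  exact absurd (hneg z hzball huz) (not_lt_of_ge hL)

/-- Any positive solution of the Dirichlet problem for the three-component competition
system with boundary data in `[0,1)` satisfies `0 < uᵢ < 1` in the open unit ball. -/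
theorem dirichlet_solution_below_one
    (ω μ β α γ : ℝ) (hμ : 0 < μ) (hβ : 0 < β) (hγ : 0 < γ) (hαγ : γ < α)
    (u₁ u₂ u₃ : ℝ × ℝ → ℝ)
    (hcont₁ : ContinuousOn u₁ unitClosedBall)
    (hcont₂ : ContinuousOn u₂ unitClosedBall)
    (hcont₃ : ContinuousOn u₃ unitClosedBall)
    (hreg₁ : ContDiffOn ℝ 2 u₁ unitBall)
    (hreg₂ : ContDiffOn ℝ 2 u₂ unitBall)
    (hreg₃ : ContDiffOn ℝ 2 u₃ unitBall)
    (hpos₁ : ∀ x ∈ unitBall, 0 < u₁ x)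
    (hpos₂ : ∀ x ∈ unitBall, 0 < u₂ x)
    (hpos₃ : ∀ x ∈ unitBall, 0 < u₃ x)
    (hpde₁ : ∀ x ∈ unitBall,
      Lop ω u₁ x = μ * u₁ x * (1 - u₁ x) - β * α * u₁ x * u₂ x - β * γ * u₁ x * u₃ x)
    (hpde₂ : ∀ x ∈ unitBall,
      Lop ω u₂ x = μ * u₂ x * (1 - u₂ x) - β * γ * u₁ x * u₂ x - β * α * u₂ x * u₃ x)
    (hpde₃ : ∀ x ∈ unitBall,
      Lop ω u₃ x = μ * u₃ x * (1 - u₃ x) - β * α * u₁ x * u₃ x - β * γ * u₂ x * u₃ x)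
    (hbc₁ : ∀ x ∈ unitSphere, 0 ≤ u₁ x ∧ u₁ x < 1)
    (hbc₂ : ∀ x ∈ unitSphere, 0 ≤ u₂ x ∧ u₂ x < 1)
    (hbc₃ : ∀ x ∈ unitSphere, 0 ≤ u₃ x ∧ u₃ x < 1) :
    ∀ x ∈ unitBall, (0 < u₁ x ∧ u₁ x < 1) ∧ (0 < u₂ x ∧ u₂ x < 1) ∧
      (0 < u₃ x ∧ u₃ x < 1) := by
  have hα : 0 < α := lt_trans hγ hαγ
  have k₁ : ∀ x ∈ unitBall, u₁ x < 1 := by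
    apply key ω u₁ hcont₁ hreg₁ _ (fun x hx => (hbc₁ x hx).2)
    intro x hx hu
    rw [hpde₁ x hx]
    have h0 : 0 < u₁ x := lt_of_lt_of_le one_pos hu
    have t1 : μ * u₁ x * (1 - u₁ x) ≤ 0 := by nlinarith [mul_pos hμ h0]
    have t2 : 0 < β * α * u₁ x * u₂ x := mul_pos (mul_pos (mul_pos hβ hα) h0) (hpos₂ x hx)
    have t3 : 0 < β * γ * u₁ x * u₃ x := mul_pos (mul_pos (mul_pos hβ hγ) h0) (hpos₃ x hx)
    linarith
  have k₂ : ∀ x ∈ unitBall, u₂ x < 1 := by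
    apply key ω u₂ hcont₂ hreg₂ _ (fun x hx => (hbc₂ x hx).2)
    intro x hx hu
    rw [hpde₂ x hx]
    have h0 : 0 < u₂ x := lt_of_lt_of_le one_pos hu
    have t1 : μ * u₂ x * (1 - u₂ x) ≤ 0 := by nlinarith [mul_pos hμ h0]
    have t2 : 0 < β * γ * u₁ x * u₂ x := mul_pos (mul_pos (mul_pos hβ hγ) (hpos₁ x hx)) h0
    have t3 : 0 < β * α * u₂ x * u₃ x := mul_pos (mul_pos (mul_pos hβ hα) h0) (hpos₃ x hx)
    linarith
  have k₃ : ∀ x ∈ unitBall, u₃ x < 1 := by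
    apply key ω u₃ hcont₃ hreg₃ _ (fun x hx => (hbc₃ x hx).2)
    intro x hx hu
    rw [hpde₃ x hx]
    have h0 : 0 < u₃ x := lt_of_lt_of_le one_pos hu
    have t1 : μ * u₃ x * (1 - u₃ x) ≤ 0 := by nlinarith [mul_pos hμ h0]
    have t2 : 0 < β * α * u₁ x * u₃ x := mul_pos (mul_pos (mul_pos hβ hα) (hpos₁ x hx)) h0
    have t3 : 0 < β * γ * u₂ x * u₃ x := mul_pos (mul_pos (mul_pos hβ hγ) (hpos₂ x hx)) h0
    linarith
  intro x hx
  exact ⟨⟨hpos₁ x hx, k₁ x hx⟩, ⟨hpos₂ x hx, k₂ x hx⟩, ⟨hpos₃ x hx, k₃ x hx⟩⟩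


end
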